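/- (Reduction 3) Let d ≥ 1. For any m ≥ 0, even c₁, c₂, c₃ and odd c₄ with 0 ≤ cᵢ ≤ 2d-1, writing n = 1 + 2d·c₁ + (2d)²·c₂ + (2d)³·c₃ + (2d)⁴·c₄ + (2d)⁵·m, one has SG(n) = SG(c₁ + 2d·c₂ + (2d)²·c₃ + (2d)³·c₄ + (2d)⁴·m). -/
import Mathlib

def mex2 (a b : ℕ) : ℕ :=
  if 0 ≠ a ∧ 0 ≠ b then 0 else if 1 ≠ a ∧ 1 ≠ b then 1 else if 2 ≠ a ∧ 2 ≠ b then 2 else 3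

def SG (d : ℕ) : ℕ → ℕ
  | 0 => 0
  | 1 => 0
  | n + 2 => mex2 (SG d (n + 1)) (SG d ((n + 2 + (2 * d - 1)) / (2 * d)))
decreasing_by
  · omega
  · rcases Nat.eq_zero_or_pos d with h | h
    · simp [h]
    · have h2 : 0 < 2 * d := by omega
      rw [Nat.div_lt_iff_lt_mul h2]
      simp only [Nat.succ_eq_add_one]
      have h6 : (n + 1 + 1) * 2 ≤ (n + 1 + 1) * (2 * d) := Nat.mul_le_mul_left _ (by omega)
      have h8 : 2 * (2 * d) ≤ (n + 1 + 1) * (2 * d) := Nat.mul_le_mul_right _ (by omega)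
      omega

lemma mex2_def' (a b : ℕ) : mex2 a b = if 0 ≠ a ∧ 0 ≠ b then 0 else if 1 ≠ a ∧ 1 ≠ b then 1 else if 2 ≠ a ∧ 2 ≠ b then 2 else 3 := rfl

lemma mex2_le (a b : ℕ) : mex2 a b ≤ 2 := by
  rw [mex2_def']; split_ifs <;> omega

lemma SG_rec (d n : ℕ) : SG d (n+2) = mex2 (SG d (n + 1)) (SG d ((n + 2 + (2 * d - 1)) / (2 * d))) := by
  rw [SG]

lemma SG_le (d n : ℕ) : SG d n ≤ 2 := by
  match n with
  | 0 => simp [SG]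
  | 1 => simp [SG]
  | n+2 => rw [SG_rec]; exact mex2_le _ _

def X (d : ℕ) : ℕ → ℕ
  | 0 => 1
  | n+1 => if SG d (n+1) = X d n then 3 - X d n else X d n

lemma X_mem (d n : ℕ) : X d n = 1 ∨ X d n = 2 := by
  induction n with
  | zero => left; rfl
  | succ n ih => rw [X]; split_ifs <;> omega

lemma X_rec (d n : ℕ) : X d (n+1) = if SG d (n+1) = X d n then 3 - X d n else X d n := by rw [X]

lemma div_eq (d k a : ℕ) (hd : 1 ≤ d) (hk : 1 ≤ k) (ha : a ≤ 2*d - 1) :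
    (2*d*(k-1) + 1 + a + (2*d-1)) / (2*d) = k := by
  obtain ⟨k', rfl⟩ : ∃ k', k = k'+1 := ⟨k-1, by omega⟩
  have h : 2*d*(k'+1-1) + 1 + a + (2*d-1) = a + 2*d*(k'+1) := by
    have h1 : 2*d*(k'+1) = 2*d*k' + 2*d := by ring
    have h2 : 2*d*(k'+1-1) = 2*d*k' := by norm_num
    omega
  rw [h, Nat.add_mul_div_left _ _ (by omega : 0 < 2*d), Nat.div_eq_of_lt (by omega)]
  omega

lemma SG_rec' (d n : ℕ) (h : 2 ≤ n) :
    SG d n = mex2 (SG d (n-1)) (SG d ((n + (2*d-1))/(2*d))) := by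
  obtain ⟨m, rfl⟩ : ∃ m, n = m+2 := ⟨n-2, by omega⟩
  rw [SG_rec]
  norm_num

lemma X_rec' (d n : ℕ) (h : 1 ≤ n) :
    X d n = if SG d n = X d (n-1) then 3 - X d (n-1) else X d (n-1) := by
  obtain ⟨j, rfl⟩ : ∃ j, n = j+1 := ⟨n-1, by omega⟩
  rw [X_rec]
  norm_num

set_option maxHeartbeats 1000000 in
lemma master (d : ℕ) (hd : 1 ≤ d) : ∀ n k a : ℕ, 1 ≤ k → a ≤ 2*d - 1 →
    n = 2*d*(k-1) + 1 + a → ¬(k = 1 ∧ a = 0) →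
    (SG d n = if SG d k = 0 then (if a % 2 = 0 then 3 - X d (k-1) else X d (k-1))
              else (if a % 2 = 0 then 0 else 3 - SG d k))
  ∧ (X d n = if SG d k = 0 then (if a % 2 = 0 then X d (k-1) else 3 - X d (k-1))
             else (if a = 0 then X d (n-1) else SG d k)) := by
  intro n
  induction n using Nat.strong_induction_on with
  | _ n ih =>
  intro k a hk ha hn hka
  have hmul : 2 ≤ k → 2*d ≤ 2*d*(k-1) := fun h => by
    have h2 : 2*d*1 ≤ 2*d*(k-1) := Nat.mul_le_mul_left _ (by omega)
    omega
  have hn2 : 2 ≤ n := by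
    rcases Nat.lt_or_ge k 2 with h | h
    · omega
    · have := hmul h; omega
  have hdiv : (n + (2*d-1)) / (2*d) = k := by rw [hn]; exact div_eq d k a hd hk ha
  have key : SG d n = mex2 (SG d (n-1)) (SG d k) := by rw [SG_rec' d n hn2, hdiv]
  have htk : SG d k ≤ 2 := SG_le d k
  have hP : SG d n = if SG d k = 0 then (if a % 2 = 0 then 3 - X d (k-1) else X d (k-1))
              else (if a % 2 = 0 then 0 else 3 - SG d k) := by
    rcases Nat.eq_zero_or_pos a with ha0 | hapos
    · subst ha0
      have hk2 : 2 ≤ k := by omega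
      obtain ⟨j, rfl⟩ : ∃ j, k = j+2 := ⟨k-2, by omega⟩
      have e1 : 2*d*(j+1) = 2*d*j + 2*d := by ring
      have hn1 : n - 1 = 2*d*j + 1 + (2*d-1) := by
        have e2 : 2*d*(j+2-1) = 2*d*(j+1) := by norm_num
        omega
      obtain ⟨hP1, -⟩ := ih (n-1) (by omega) (j+1) (2*d-1) (by omega) le_rfl
        (by simpa using hn1) (by omega)
      simp only [Nat.add_sub_cancel] at hP1
      have hx : X d (j+1) = if SG d (j+1) = X d j then 3 - X d j else X d j := X_rec d j
      have hu2 := X_mem d j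
      have hs : SG d (j+1) ≤ 2 := SG_le d (j+1)
      have e3 : j + 2 - 1 = j + 1 := rfl
      rw [key, hP1, mex2_def', e3]
      split_ifs at hx ⊢ <;> omega
    · by_cases hk1 : k = 1 ∧ a = 1
      · obtain ⟨hk1, ha1⟩ := hk1
        subst hk1; subst ha1
        have hn' : n = 2 := by simpa using hn
        subst hn'
        have h1 : SG d 1 = 0 := by simp [SG]
        have h0 : X d 0 = 1 := rfl
        rw [key, h1, h0, mex2_def']
        norm_num
      · have hn1 : n - 1 = 2*d*(k-1) + 1 + (a-1) := by omega
        obtain ⟨hP1, -⟩ := ih (n-1) (by omega) k (a-1) hk (by omega) hn1 (by omega)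
        have hu := X_mem d (k-1)
        rw [key, hP1, mex2_def']
        split_ifs <;> omega
  refine ⟨hP, ?_⟩
  have hxn := X_rec' d n (by omega)
  by_cases hcase : SG d k ≠ 0 ∧ a % 2 = 0 ∧ 1 ≤ a
  · obtain ⟨hc1, hc2, hc3⟩ := hcase
    have hn1 : n - 1 = 2*d*(k-1) + 1 + (a-1) := by omega
    obtain ⟨-, hQ1⟩ := ih (n-1) (by omega) k (a-1) hk (by omega) hn1 (by omega)
    rw [hP] at hxn
    rw [hxn, hQ1]
    have hu := X_mem d (k-1)
    split_ifs <;> omega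
  · rw [hP] at hxn
    rw [hxn]
    have hu := X_mem d (k-1)
    have hv := X_mem d (n-1)
    split_ifs <;> omega

theorem stmt_11 (d : ℕ) (hd : 1 ≤ d) (c₁ c₂ c₃ c₄ m : ℕ)
    (h1 : Even c₁) (h2 : Even c₂) (h3 : Even c₃) (h4 : Odd c₄)
    (b1 : c₁ ≤ 2 * d - 1) (b2 : c₂ ≤ 2 * d - 1) (b3 : c₃ ≤ 2 * d - 1)
    (b4 : c₄ ≤ 2 * d - 1) :
    SG d (1 + 2 * d * c₁ + (2 * d) ^ 2 * c₂ + (2 * d) ^ 3 * c₃ + (2 * d) ^ 4 * c₄ +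
        (2 * d) ^ 5 * m) =
      SG d (c₁ + 2 * d * c₂ + (2 * d) ^ 2 * c₃ + (2 * d) ^ 3 * c₄ + (2 * d) ^ 4 * m) := by
  have p1 : c₁ % 2 = 0 := Nat.even_iff.mp h1
  have p2 : c₂ % 2 = 0 := Nat.even_iff.mp h2
  have p3 : c₃ % 2 = 0 := Nat.even_iff.mp h3
  have p4 : c₄ % 2 = 1 := Nat.odd_iff.mp h4
  obtain ⟨K4, hK4⟩ : ∃ x, x = 2*d*m + 1 + c₄ := ⟨_, rfl⟩
  obtain ⟨K3, hK3⟩ : ∃ x, x = 2*d*(K4-1) + 1 + c₃ := ⟨_, rfl⟩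
  obtain ⟨K2, hK2⟩ : ∃ x, x = 2*d*(K3-1) + 1 + c₂ := ⟨_, rfl⟩
  obtain ⟨K1, hK1⟩ : ∃ x, x = 2*d*(K2-1) + 1 + c₁ := ⟨_, rfl⟩
  have g4 : 2 ≤ K4 := by omega
  have g3 : 2*d + 1 ≤ K3 := by
    have h2 : 2*d*1 ≤ 2*d*(K4-1) := Nat.mul_le_mul_left _ (by omega)
    omega
  have g2 : 2*d + 1 ≤ K2 := by
    have h2 : 2*d*1 ≤ 2*d*(K3-1) := Nat.mul_le_mul_left _ (by omega)
    omega
  have g1 : 2*d + 1 ≤ K1 := by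
    have h2 : 2*d*1 ≤ 2*d*(K2-1) := Nat.mul_le_mul_left _ (by omega)
    omega
  obtain ⟨P4, -⟩ := master d hd K4 (m+1) c₄ (by omega) b4 (by simp [hK4]) (by omega)
  simp only [Nat.add_sub_cancel] at P4
  have f4 : SG d K4 ≠ 0 := by
    have hx := X_mem d m
    have hs := SG_le d (m+1)
    rw [P4]; split_ifs <;> omega
  obtain ⟨P3, -⟩ := master d hd K3 K4 c₃ (by omega) b3 hK3 (by omega)
  have f3 : SG d K3 = 0 := by rw [P3]; split_ifs <;> omega
  obtain ⟨P2, -⟩ := master d hd K2 K3 c₂ (by omega) b2 hK2 (by omega)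
  have f2 : SG d K2 ≠ 0 := by
    have hx := X_mem d (K3-1)
    rw [P2]; split_ifs <;> omega
  have f2' : SG d K2 ≤ 2 := SG_le d K2
  obtain ⟨P1, -⟩ := master d hd K1 K2 c₁ (by omega) b1 hK1 (by omega)
  have f1 : SG d K1 = 0 := by rw [P1]; split_ifs <;> omega
  obtain ⟨PN, -⟩ := master d hd (2*d*(K1-1)+1) K1 0 (by omega) (by omega) (by omega)
    (by omega)
  have fN : SG d (2*d*(K1-1)+1) = 3 - X d (K1-1) := by
    rw [PN]; split_ifs <;> omega
  have e1 : K1 - 1 = 2*d*(K2-1) + c₁ := by omega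
  have e2 : K2 - 1 = 2*d*(K3-1) + c₂ := by omega
  have e3 : K3 - 1 = 2*d*(K4-1) + c₃ := by omega
  have e4 : K4 - 1 = 2*d*m + c₄ := by omega
  have eR : c₁ + 2 * d * c₂ + (2 * d) ^ 2 * c₃ + (2 * d) ^ 3 * c₄ + (2 * d) ^ 4 * m
      = K1 - 1 := by
    rw [e1, e2, e3, e4]; ring
  have eL : 1 + 2 * d * c₁ + (2 * d) ^ 2 * c₂ + (2 * d) ^ 3 * c₃ + (2 * d) ^ 4 * c₄ +
      (2 * d) ^ 5 * m = 2*d*(K1-1) + 1 := by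
    rw [e1, e2, e3, e4]; ring
  rw [eL, eR, fN]
  rcases Nat.eq_zero_or_pos c₁ with hc | hc
  · subst hc
    have ej : 2*d*(K2-1) = 2*d*(K2-1-1) + 2*d := by
      obtain ⟨j, rfl⟩ : ∃ j, K2 = j+2 := ⟨K2-2, by omega⟩
      show 2*d*(j+1) = 2*d*j + 2*d
      ring
    obtain ⟨Pn, Qn⟩ := master d hd (K1-1) (K2-1) (2*d-1) (by omega) le_rfl (by omega)
      (by omega)
    have hx := X_mem d (K2-1-1)
    have hs := SG_le d (K2-1)
    rw [Pn, Qn]; split_ifs <;> omega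
  · obtain ⟨Pn, Qn⟩ := master d hd (K1-1) K2 (c₁-1) (by omega) (by omega) (by omega)
      (by omega)
    rw [Pn, Qn]; split_ifs <;> omega
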